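/- Let ρ_H = (I + (X + Z)/√2)/2 be the single-qubit Hadamard-eigenstate density matrix. Then D(ρ_H) = (1 + √2)/2 > 1 (so ρ_H is not hyper-octahedral), while D(ρ_H ⊗ I/2) = (1 + √2)/4 ≤ 1 (so the two-qubit state ρ_H ⊗ I/2 is hyper-octahedral). -/

import Mathlib

open Matrix BigOperators Kronecker

noncomputable section

/-- The four single-qubit Pauli matrices `I, X, Y, Z`. -/
def pauli1 : Fin 4 → Matrix (Fin 2) (Fin 2) ℂ :=
  ![(1 : Matrix (Fin 2) (Fin 2) ℂ),
    !![0, 1; 1, 0],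
    !![0, -Complex.I; Complex.I, 0],
    !![1, 0; 0, -1]]

/-- The `n`-qubit Pauli matrix `σ_{s 0} ⊗ ⋯ ⊗ σ_{s (n-1)}`, as a matrix on `Fin n → Fin 2`. -/
def nPauli (n : ℕ) (s : Fin n → Fin 4) :
    Matrix (Fin n → Fin 2) (Fin n → Fin 2) ℂ :=
  Matrix.of fun x y => ∏ k : Fin n, pauli1 (s k) (x k) (y k)

/-- The stabilizer norm `D(A) = 2^{-n} Σ_{σ ∈ P_n} |Tr(σ A)|`. -/
def stabNorm {n : ℕ} (A : Matrix (Fin n → Fin 2) (Fin n → Fin 2) ℂ) : ℝ :=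
  ((2 : ℝ) ^ n)⁻¹ * ∑ s : Fin n → Fin 4, ‖(nPauli n s * A).trace‖

/-- The Kronecker (tensor) product of an `n`-qubit matrix and an `m`-qubit matrix,
viewed as an `(n+m)`-qubit matrix. -/
def qKron {n m : ℕ} (A : Matrix (Fin n → Fin 2) (Fin n → Fin 2) ℂ)
    (B : Matrix (Fin m → Fin 2) (Fin m → Fin 2) ℂ) :
    Matrix (Fin (n + m) → Fin 2) (Fin (n + m) → Fin 2) ℂ :=
  Matrix.of fun x y =>
    A (fun i => x (Fin.castAdd m i)) (fun i => y (Fin.castAdd m i)) *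
    B (fun j => x (Fin.natAdd n j)) (fun j => y (Fin.natAdd n j))

/-- The single-qubit Hadamard-eigenstate density matrix `ρ_H = (I + (X + Z)/√2)/2`,
as a 1-qubit matrix. -/
def rhoH : Matrix (Fin 1 → Fin 2) (Fin 1 → Fin 2) ℂ :=
  (2 : ℂ)⁻¹ • ((1 : Matrix (Fin 1 → Fin 2) (Fin 1 → Fin 2) ℂ) +
    ((Real.sqrt 2 : ℝ) : ℂ)⁻¹ • (nPauli 1 ![1] + nPauli 1 ![3]))



lemma sum_pi_one {k : ℕ} {M : Type*} [AddCommMonoid M] (f : (Fin 1 → Fin k) → M) :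
    ∑ s, f s = ∑ i : Fin k, f (fun _ => i) := by
  rw [← (Equiv.funUnique (Fin 1) (Fin k)).symm.sum_comp]
  rfl

lemma sum_pi_two {k : ℕ} {M : Type*} [AddCommMonoid M] (f : (Fin 2 → Fin k) → M) :
    ∑ s, f s = ∑ p : Fin k × Fin k, f ![p.1, p.2] := by
  rw [← (finTwoArrowEquiv (Fin k)).symm.sum_comp]
  rfl

lemma inv_sqrt_two : (Real.sqrt 2)⁻¹ = Real.sqrt 2 / 2 := by
  have h2 : (0:ℝ) < Real.sqrt 2 := by positivity
  rw [inv_eq_one_div, div_eq_div_iff h2.ne' two_ne_zero, one_mul,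
    Real.mul_self_sqrt (by norm_num)]

lemma stabNorm_rhoH : stabNorm rhoH = (1 + Real.sqrt 2) / 2 := by
  have h2 : (0:ℝ) < Real.sqrt 2 := by positivity
  rw [stabNorm]
  simp only [Matrix.trace, Matrix.diag, Matrix.mul_apply, sum_pi_one]
  simp only [Fin.sum_univ_four, Fin.sum_univ_two]
  simp only [rhoH, nPauli, pauli1, Matrix.one_apply, Fin.sum_univ_one, Matrix.smul_apply,
    Matrix.add_apply, Matrix.of_apply, Matrix.cons_val_zero, Matrix.cons_val_one,
    Matrix.head_cons, Matrix.cons_val', Matrix.cons_val, Matrix.empty_val', Matrix.cons_val_fin_one,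
    Matrix.head_fin_const, smul_eq_mul, funext_iff, Fin.forall_fin_one]
  norm_num
  set a : ℂ := ((Real.sqrt 2 : ℝ) : ℂ)⁻¹ with ha
  rw [show (1/2 * (1 + a) + 1/2 * (1 + -a)) = 1 by ring]
  rw [show (1/2 * a + 1/2 * a) = a by ring]
  rw [show (1/2 * (1 + a) + -(1/2 * (1 + -a))) = a by ring]
  rw [ha, ← Complex.ofReal_inv, Complex.norm_real, Real.norm_eq_abs, abs_of_pos (by positivity), norm_one]
  rw [inv_sqrt_two]; ring

lemma stabNorm_tensor : stabNorm (qKron rhoH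
      ((2 : ℂ)⁻¹ • (1 : Matrix (Fin 1 → Fin 2) (Fin 1 → Fin 2) ℂ))) =
      (1 + Real.sqrt 2) / 4 := by
  have h2 : (0:ℝ) < Real.sqrt 2 := by positivity
  show ((2:ℝ)^(2:ℕ))⁻¹ * ∑ s : Fin 2 → Fin 4,
    ‖(nPauli 2 s * qKron rhoH
      ((2 : ℂ)⁻¹ • (1 : Matrix (Fin 1 → Fin 2) (Fin 1 → Fin 2) ℂ))).trace‖ =
      (1 + Real.sqrt 2) / 4
  simp only [Matrix.trace, Matrix.diag, Matrix.mul_apply, sum_pi_two]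
  simp only [Fintype.sum_prod_type, Fin.sum_univ_four, Fin.sum_univ_two]
  have hc : Fin.castAdd 1 (0 : Fin 1) = (0 : Fin 2) := rfl
  have hn : Fin.natAdd 1 (0 : Fin 1) = (1 : Fin 2) := rfl
  simp only [hc, hn, rhoH, nPauli, pauli1, qKron, Matrix.one_apply, Fin.prod_univ_two,
    Fin.sum_univ_one, Fin.prod_univ_one, Matrix.smul_apply,
    Matrix.add_apply, Matrix.of_apply, Matrix.cons_val_zero, Matrix.cons_val_one,
    Matrix.head_cons, Matrix.cons_val', Matrix.cons_val, Matrix.empty_val', Matrix.cons_val_fin_one,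
    Matrix.head_fin_const, smul_eq_mul, funext_iff, Fin.forall_fin_one, Fin.forall_fin_two]
  norm_num
  set a : ℂ := ((Real.sqrt 2 : ℝ) : ℂ)⁻¹ with ha
  rw [show (1/2 * (1 + a) * (1/2) + 1/2 * (1 + a) * (1/2) +
        (1/2 * (1 + -a) * (1/2) + 1/2 * (1 + -a) * (1/2))) = 1 by ring]
  rw [show (1/2 * a * (1/2) + 1/2 * a * (1/2) + (1/2 * a * (1/2) + 1/2 * a * (1/2))) = a by ring]
  rw [show (1/2 * (1 + a) * (1/2) + 1/2 * (1 + a) * (1/2) +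
        (-(1/2 * (1 + -a) * (1/2)) + -(1/2 * (1 + -a) * (1/2)))) = a by ring]
  rw [ha, ← Complex.ofReal_inv, Complex.norm_real, Real.norm_eq_abs, abs_of_pos (by positivity), norm_one]
  rw [inv_sqrt_two]; ring


/-- `D(ρ_H) = (1+√2)/2 > 1` (so `ρ_H` is not hyper-octahedral), while
`D(ρ_H ⊗ I/2) = (1+√2)/4 ≤ 1` (so `ρ_H ⊗ I/2` is hyper-octahedral). -/
theorem rhoH_not_octahedral_but_tensor_is :
    stabNorm rhoH = (1 + Real.sqrt 2) / 2 ∧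
    1 < stabNorm rhoH ∧
    stabNorm (qKron rhoH
      ((2 : ℂ)⁻¹ • (1 : Matrix (Fin 1 → Fin 2) (Fin 1 → Fin 2) ℂ))) =
      (1 + Real.sqrt 2) / 4 ∧
    stabNorm (qKron rhoH
      ((2 : ℂ)⁻¹ • (1 : Matrix (Fin 1 → Fin 2) (Fin 1 → Fin 2) ℂ))) ≤ 1 := by
  have h1 : 1 < Real.sqrt 2 := by
    rw [show (1:ℝ) = Real.sqrt 1 by simp]
    exact Real.sqrt_lt_sqrt (by norm_num) (by norm_num)
  have h3 : Real.sqrt 2 ≤ 3 := by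
    rw [show (3:ℝ) = Real.sqrt 9 by rw [show (9:ℝ) = 3^2 by norm_num, Real.sqrt_sq]; norm_num]
    exact Real.sqrt_le_sqrt (by norm_num)
  refine ⟨stabNorm_rhoH, ?_, stabNorm_tensor, ?_⟩
  · rw [stabNorm_rhoH]; linarith
  · rw [stabNorm_tensor]; linarith
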